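/- Let n ≥ 1 be an integer, let s ≥ 0, and let v₁,…,v_n be valuations given by integrable densities, each s-normalized. Let R be an axes-aligned rectangle with v_i(R) ≥ 2^{n+2} for every i ∈ {1,…,n}. Then there exists a pairwise s-separated family of axes-aligned rectangles A₁,…,A_n ⊆ R such that v_i(A_i) ≥ 1 for every i ∈ {1,…,n}. -/

import Mathlib

open MeasureTheory

noncomputable section

/-- A point of the plane. -/
abbrev Pt := ℝ × ℝ

/-- The ℓ∞ distance between two points of the plane. -/
def linfDist (p q : Pt) : ℝ := max |p.1 - q.1| |p.2 - q.2|

/-- Two pieces of land are `s`-separated: every pair of points, one from each piece,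
is at ℓ∞ distance at least `s`. -/
def SepSets (s : ℝ) (A B : Set Pt) : Prop := ∀ p ∈ A, ∀ q ∈ B, s ≤ linfDist p q

/-- An axes-aligned rectangle `[a,b] × [c,d]` with `a < b` and `c < d`. -/
structure Rect where
  a : ℝ
  b : ℝ
  c : ℝ
  d : ℝ
  hab : a < b
  hcd : c < d

/-- The set of points of a rectangle. -/
def Rect.set (R : Rect) : Set Pt := Set.Icc R.a R.b ×ˢ Set.Icc R.c R.d

/-- The length of the shorter side of a rectangle. -/
def Rect.short (R : Rect) : ℝ := min (R.b - R.a) (R.d - R.c)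

/-- The length of the longer side of a rectangle. -/
def Rect.long (R : Rect) : ℝ := max (R.b - R.a) (R.d - R.c)

/-- A rectangle is `r`-fat if its longer side is at most `r` times its shorter side. -/
def Rect.Fat (r : ℝ) (R : Rect) : Prop := R.long ≤ r * R.short

/-- The value of a piece `Z` under the density `f`. -/
def val (f : Pt → ℝ) (Z : Set Pt) : ℝ := ∫ p in Z, f p

/-- The 1-out-of-`k` maximin share of an agent with density `f` on land `L`
with separation parameter `s`: the supremum over families of `k` axes-aligned
rectangles inside `L`, pairwise intersecting in zero measure and pairwise
`s`-separated, of the minimum value of a rectangle. -/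
def MMS (f : Pt → ℝ) (L : Set Pt) (s : ℝ) (k : ℕ) : ℝ :=
  sSup {t : ℝ | ∃ P : Fin k → Rect,
    (∀ j, (P j).set ⊆ L) ∧
    (∀ i j, i ≠ j → volume ((P i).set ∩ (P j).set) = 0) ∧
    (∀ i j, i ≠ j → SepSets s ((P i).set) ((P j).set)) ∧
    (∀ j, t ≤ val f ((P j).set))}

/-- A valuation given by density `f` is `s`-normalized: there are finitely many
pairwise `s`-separated axes-aligned rectangles, each of value at most 1,
such that `f` vanishes outside their union. -/
def SNormalized (s : ℝ) (f : Pt → ℝ) : Prop :=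
  ∃ (N : ℕ) (Q : Fin N → Rect),
    (∀ i j, i ≠ j → SepSets s ((Q i).set) ((Q j).set)) ∧
    (∀ i, val f ((Q i).set) ≤ 1) ∧
    (∀ p, p ∉ ⋃ i, (Q i).set → f p = 0)

/-- The unit square `[0,1] × [0,1]`. -/
def unitSquare : Set Pt := Set.Icc (0 : ℝ) 1 ×ˢ Set.Icc (0 : ℝ) 1

/-- `Guillotine s a0 a1 b0 b1 P`: the family `P` of rectangles forms an
`s`-separated guillotine partition of `[a0,a1] × [b0,b1]`. -/
inductive Guillotine (s : ℝ) : ℝ → ℝ → ℝ → ℝ → List Rect → Prop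
  | single (a0 a1 b0 b1 : ℝ) (P : Rect)
      (h : P.set ⊆ Set.Icc a0 a1 ×ˢ Set.Icc b0 b1) :
      Guillotine s a0 a1 b0 b1 [P]
  | vert (a0 a1 b0 b1 a : ℝ) (h1 : a0 < a) (h2 : a < a1 - s)
      (P1 P2 : List Rect)
      (g1 : Guillotine s a0 a b0 b1 P1)
      (g2 : Guillotine s (a + s) a1 b0 b1 P2) :
      Guillotine s a0 a1 b0 b1 (P1 ++ P2)
  | horiz (a0 a1 b0 b1 b : ℝ) (h1 : b0 < b) (h2 : b < b1 - s)
      (P1 P2 : List Rect)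
      (g1 : Guillotine s a0 a1 b0 b P1)
      (g2 : Guillotine s a0 a1 (b + s) b1 P2) :
      Guillotine s a0 a1 b0 b1 (P1 ++ P2)


section mainproof

lemma null_vline (x : ℝ) : volume {p : Pt | p.1 = x} = 0 := by
  have : {p : Pt | p.1 = x} = ({x} : Set ℝ) ×ˢ (Set.univ : Set ℝ) := by
    ext p
    simp only [Set.mem_setOf_eq, Set.mem_prod, Set.mem_singleton_iff, Set.mem_univ, and_true]
  rw [this, Measure.volume_eq_prod, MeasureTheory.Measure.prod_prod]
  simp

lemma null_hline (y : ℝ) : volume {p : Pt | p.2 = y} = 0 := by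
  have : {p : Pt | p.2 = y} = (Set.univ : Set ℝ) ×ˢ ({y} : Set ℝ) := by
    ext p
    simp only [Set.mem_setOf_eq, Set.mem_prod, Set.mem_singleton_iff, Set.mem_univ, true_and]
  rw [this, Measure.volume_eq_prod, MeasureTheory.Measure.prod_prod]
  simp

lemma val_nonneg (hpos : ∀ p, 0 ≤ f p) (Z : Set Pt) : 0 ≤ val f Z :=
  integral_nonneg fun p => hpos p

lemma val_mono (hf : Integrable f) (hpos : ∀ p, 0 ≤ f p) {Y Z : Set Pt} (h : Y ⊆ Z) :
    val f Y ≤ val f Z :=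
  setIntegral_mono_set hf.integrableOn (Filter.Eventually.of_forall fun p => hpos p)
    (HasSubset.Subset.eventuallyLE h)

lemma val_null {Z : Set Pt} (h : volume Z = 0) : val f Z = 0 := by
  unfold val
  rw [Measure.restrict_eq_zero.mpr h, integral_zero_measure]

lemma val_congr {Y Z : Set Pt} (h : Y =ᵐ[volume] Z) : val f Y = val f Z :=
  setIntegral_congr_set h

lemma ae_eq_of_symmdiff_null {Y Z W : Set Pt} (hW : volume W = 0)
    (h1 : Y \ Z ⊆ W) (h2 : Z \ Y ⊆ W) : Y =ᵐ[volume] Z := by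
  apply MeasureTheory.ae_eq_set.mpr
  exact ⟨measure_mono_null h1 hW, measure_mono_null h2 hW⟩

lemma val_union_le (hf : Integrable f) (hpos : ∀ p, 0 ≤ f p) {Y Z : Set Pt}
    (hY : MeasurableSet Y) (hZ : MeasurableSet Z) :
    val f (Y ∪ Z) ≤ val f Y + val f Z := by
  have hd : Disjoint Y (Z \ Y) := disjoint_sdiff_self_right
  have : Y ∪ Z = Y ∪ (Z \ Y) := by rw [Set.union_diff_self]
  rw [val, this, setIntegral_union hd (hZ.diff hY) hf.integrableOn hf.integrableOn]
  have : (∫ p in Z \ Y, f p) ≤ ∫ p in Z, f p := by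
    apply setIntegral_mono_set hf.integrableOn (Filter.Eventually.of_forall fun p => hpos p)
      (HasSubset.Subset.eventuallyLE Set.diff_subset)
  exact add_le_add_right this _

lemma val_split (hf : Integrable f) {π : Pt → ℝ} (hπ : Measurable π)
    (hnull : ∀ c, volume {p : Pt | π p = c} = 0)
    {Z : Set Pt} (hZ : MeasurableSet Z) (x : ℝ) :
    val f Z = val f (Z ∩ {p | π p ≤ x}) + val f (Z ∩ {p | x ≤ π p}) := by
  have hmeas : MeasurableSet {p : Pt | π p ≤ x} := hπ measurableSet_Iic
  have hsplit : Z = (Z ∩ {p | π p ≤ x}) ∪ (Z ∩ {p | x < π p}) := by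
    ext p
    constructor
    · intro hp
      by_cases h : π p ≤ x
      · exact Or.inl ⟨hp, h⟩
      · exact Or.inr ⟨hp, lt_of_not_ge h⟩
    · rintro (⟨hp, -⟩ | ⟨hp, -⟩) <;> exact hp
  have hd : Disjoint (Z ∩ {p | π p ≤ x}) (Z ∩ {p | x < π p}) := by
    apply Set.disjoint_left.mpr
    rintro p ⟨-, h1⟩ ⟨-, h2⟩
    exact absurd (Set.mem_setOf_eq ▸ h1) (not_le.mpr h2)
  have e1 : val f Z = val f (Z ∩ {p | π p ≤ x}) + val f (Z ∩ {p | x < π p}) := by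
    rw [val]
    conv_lhs => rw [hsplit]
    exact setIntegral_union hd (hZ.inter (hπ measurableSet_Ioi)) hf.integrableOn hf.integrableOn
  have e2 : val f (Z ∩ {p | x < π p}) = val f (Z ∩ {p | x ≤ π p}) := by
    apply setIntegral_congr_set
    apply ae_eq_of_symmdiff_null (hnull x)
    · rintro p ⟨⟨hpZ, h⟩, h3⟩
      exact absurd ⟨hpZ, Set.mem_setOf_eq ▸ le_of_lt h⟩ h3
    · rintro p ⟨⟨hpZ, h2⟩, h3⟩
      simp only [Set.mem_setOf_eq]
      by_contra hne
      exact h3 ⟨hpZ, lt_of_le_of_ne h2 (Ne.symm hne)⟩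
  rw [e1, e2]

lemma val_cont (hf : Integrable f) {π : Pt → ℝ} (hπ : Measurable π)
    (hnull : ∀ c, volume {p : Pt | π p = c} = 0)
    {Z : Set Pt} (hZ : MeasurableSet Z) :
    Continuous (fun x => val f (Z ∩ {p | π p ≤ x})) := by
  have hmea : ∀ x : ℝ, MeasurableSet (Z ∩ {p : Pt | π p ≤ x}) := by
    intro x
    exact hZ.inter (hπ measurableSet_Iic)
  have hkey : ∀ x, val f (Z ∩ {p | π p ≤ x})
      = ∫ p, (Z ∩ {p | π p ≤ x}).indicator f p := by
    intro x
    rw [val]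
    exact (integral_indicator (hmea x)).symm
  rw [continuous_iff_continuousAt]
  intro x₀
  unfold ContinuousAt
  simp only [hkey]
  apply tendsto_integral_filter_of_dominated_convergence (fun p => ‖f p‖)
  · exact Filter.Eventually.of_forall fun x =>
      hf.aestronglyMeasurable.indicator (hmea x)
  · exact Filter.Eventually.of_forall fun x =>
      Filter.Eventually.of_forall fun p => norm_indicator_le_norm_self f p
  · exact hf.norm
  · have hae : ∀ᵐ p : Pt, π p ≠ x₀ := by
      rw [ae_iff]
      convert hnull x₀ using 2
      ext p; simp
    filter_upwards [hae] with p hp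
    by_cases hpZ : p ∈ Z
    · rcases lt_or_gt_of_ne hp with h | h
      · have hx₀ : (Z ∩ {p : Pt | π p ≤ x₀}).indicator f p = f p :=
          Set.indicator_of_mem (show p ∈ Z ∩ {p : Pt | π p ≤ x₀} from ⟨hpZ, le_of_lt h⟩) f
        rw [hx₀]
        apply Filter.Tendsto.congr' (f₁ := fun _ => f p) _ tendsto_const_nhds
        filter_upwards [Ioi_mem_nhds h] with y hy
        exact (Set.indicator_of_mem (show p ∈ Z ∩ {p : Pt | π p ≤ y} from ⟨hpZ, (le_of_lt hy : π p ≤ y)⟩) f).symm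
      · have hx₀ : (Z ∩ {p : Pt | π p ≤ x₀}).indicator f p = 0 := by
          apply Set.indicator_of_notMem
          rintro ⟨-, hc⟩
          exact absurd (show π p ≤ x₀ from hc) (not_le.mpr h)
        rw [hx₀]
        apply Filter.Tendsto.congr' (f₁ := fun _ => (0:ℝ)) _ tendsto_const_nhds
        filter_upwards [Iio_mem_nhds h] with y hy
        refine (Set.indicator_of_notMem ?_ f).symm
        rintro ⟨-, hc⟩
        exact absurd (show π p ≤ y from hc) (not_le.mpr hy)
    · have h0 : ∀ y : ℝ, (Z ∩ {p : Pt | π p ≤ y}).indicator f p = 0 := by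
        intro y
        exact Set.indicator_of_notMem (fun hc => hpZ hc.1) f
      rw [h0 x₀]
      apply Filter.Tendsto.congr' (f₁ := fun _ => (0:ℝ)) _ tendsto_const_nhds
      exact Filter.Eventually.of_forall fun y => (h0 y).symm

lemma val_mono_in_x (hf : Integrable f) (hpos : ∀ p, 0 ≤ f p) {π : Pt → ℝ}
    {Z : Set Pt} : Monotone (fun x => val f (Z ∩ {p | π p ≤ x})) := by
  intro x y hxy
  apply setIntegral_mono_set hf.integrableOn (Filter.Eventually.of_forall fun p => hpos p)
  apply HasSubset.Subset.eventuallyLE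
  exact Set.inter_subset_inter_right _ fun p hp => le_trans hp hxy

lemma meas_x_le (x : ℝ) : MeasurableSet {p : Pt | p.1 ≤ x} := measurable_fst measurableSet_Iic
lemma meas_y_le (y : ℝ) : MeasurableSet {p : Pt | p.2 ≤ y} := measurable_snd measurableSet_Iic

lemma rect_meas (R : Rect) : MeasurableSet R.set :=
  measurableSet_Icc.prod measurableSet_Icc

lemma val_biUnion_le {f : Pt → ℝ} (hf : Integrable f) (hpos : ∀ p, 0 ≤ f p)
    {ι : Type*} (I : Finset ι) (g : ι → Set Pt) (hg : ∀ i, MeasurableSet (g i)) :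
    val f (⋃ i ∈ I, g i) ≤ ∑ i ∈ I, val f (g i) := by
  classical
  induction I using Finset.induction_on with
  | empty =>
    have : val f (⋃ i ∈ (∅ : Finset ι), g i) = 0 := by
      apply val_null; simp
    rw [show (⋃ i ∈ (∅ : Finset ι), g i) = (∅ : Set Pt) by simp] at this
    simp [this]
  | insert a I' hnotmem ih =>
    rw [Finset.set_biUnion_insert, Finset.sum_insert hnotmem]
    calc val f (g a ∪ ⋃ i ∈ I', g i) ≤ val f (g a) + val f (⋃ i ∈ I', g i) :=
          val_union_le hf hpos (hg a) (I'.measurableSet_biUnion fun i _ => hg i)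
      _ ≤ _ := add_le_add_right ih _

lemma count_le {f : Pt → ℝ} {s : ℝ} (hs : 0 < s) (hf : Integrable f) (hpos : ∀ p, 0 ≤ f p)
    (hnorm : SNormalized s f) (u1 u2 w : ℝ) (M : ℕ) (hM : u2 - u1 ≤ (M : ℝ) * s) :
    val f (Set.Icc u1 u2 ×ˢ Set.Icc w (w + s)) ≤ (M : ℝ) + 1 := by
  classical
  obtain ⟨NN, Q, hsep, hval1, hvan⟩ := hnorm
  set E : Set Pt := Set.Icc u1 u2 ×ˢ Set.Icc w (w + s) with hE
  set E' : Set Pt := Set.Icc u1 u2 ×ˢ Set.Ico w (w + s) with hE'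
  have hmE' : MeasurableSet E' := measurableSet_Icc.prod measurableSet_Ico
  have heq : val f E = val f E' := by
    apply val_congr
    apply ae_eq_of_symmdiff_null (null_hline (w + s))
    · rintro p ⟨⟨hp1, hp2⟩, hnp⟩
      simp only [Set.mem_setOf_eq]
      by_contra hne
      exact hnp ⟨hp1, hp2.1, lt_of_le_of_ne hp2.2 hne⟩
    · rintro p ⟨hp, hnp⟩
      exact absurd ⟨hp.1, hp.2.1, le_of_lt hp.2.2⟩ hnp
  rw [heq]
  set I : Finset (Fin NN) := Finset.univ.filter (fun i => ((Q i).set ∩ E').Nonempty) with hI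
  -- the value vanishes outside the union of pieces meeting E'
  have hsplit : val f E' ≤ ∑ i ∈ I, val f ((Q i).set ∩ E') := by
    have hcover : val f E' = val f (⋃ i ∈ I, ((Q i).set ∩ E')) + val f (E' \ ⋃ i ∈ I, ((Q i).set ∩ E')) := by
      have hU : MeasurableSet (⋃ i ∈ I, ((Q i).set ∩ E')) :=
        I.measurableSet_biUnion fun i _ => (rect_meas _).inter hmE'
      have : E' = (⋃ i ∈ I, ((Q i).set ∩ E')) ∪ (E' \ ⋃ i ∈ I, ((Q i).set ∩ E')) := by
        rw [Set.union_diff_self, Set.union_eq_self_of_subset_left]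
        exact Set.iUnion₂_subset fun i _ => Set.inter_subset_right
      conv_lhs => rw [this]
      unfold val
      rw [setIntegral_union disjoint_sdiff_self_right (hmE'.diff hU)
        hf.integrableOn hf.integrableOn]
    have hzero : val f (E' \ ⋃ i ∈ I, ((Q i).set ∩ E')) = 0 := by
      unfold val
      rw [setIntegral_congr_fun]
      · exact integral_zero _ _
      · exact hmE'.diff (I.measurableSet_biUnion fun i _ => (rect_meas _).inter hmE')
      · intro p hp
        apply hvan
        intro hmem
        rcases Set.mem_iUnion.mp hmem with ⟨i, hpi⟩
        apply hp.2
        apply Set.mem_biUnion (Finset.mem_filter.mpr ⟨Finset.mem_univ i, ⟨p, hpi, hp.1⟩⟩)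
        exact ⟨hpi, hp.1⟩
    rw [hcover, hzero, add_zero]
    exact val_biUnion_le hf hpos I _ fun i => (rect_meas _).inter hmE'
  have hsum : ∑ i ∈ I, val f ((Q i).set ∩ E') ≤ (I.card : ℝ) := by
    calc ∑ i ∈ I, val f ((Q i).set ∩ E') ≤ ∑ i ∈ I, (1:ℝ) := by
          apply Finset.sum_le_sum
          intro i _
          exact le_trans (val_mono hf hpos Set.inter_subset_left) (hval1 i)
      _ = I.card := by simp
  have hcard : I.card ≤ M + 1 := by
    have hsle : ∀ i ∈ I, ((Q i).set ∩ E').Nonempty := fun i hi => (Finset.mem_filter.mp hi).2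
    set g : Fin NN → ℕ := fun i =>
      if h : ((Q i).set ∩ E').Nonempty then Nat.floor ((h.choose.1 - u1) / s) else 0 with hg
    have hpt : ∀ i (h : ((Q i).set ∩ E').Nonempty), h.choose ∈ (Q i).set ∧ h.choose ∈ E' :=
      fun i h => h.choose_spec
    have hmaps : ∀ i ∈ I, g i ∈ Finset.range (M + 1) := by
      intro i hi
      have h := hsle i hi
      have hp := hpt i h
      have hx : h.choose.1 ∈ Set.Icc u1 u2 := hp.2.1
      rw [Finset.mem_range, Nat.lt_succ_iff, hg]
      simp only [dif_pos h]
      have : (h.choose.1 - u1) / s ≤ (M : ℝ) := by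
        rw [div_le_iff₀ hs]
        have := hx.2
        linarith
      calc Nat.floor ((h.choose.1 - u1) / s) ≤ Nat.floor ((M : ℝ)) := Nat.floor_le_floor this
        _ = M := Nat.floor_natCast M
    have hinj : Set.InjOn g I := by
      intro i hi j hj hgij
      by_contra hne
      have hI1 := hsle i hi
      have hI2 := hsle j hj
      obtain ⟨hpQ, hpE⟩ := hpt i hI1
      obtain ⟨hqQ, hqE⟩ := hpt j hI2
      set p := hI1.choose
      set q := hI2.choose
      have hy : |p.2 - q.2| < s := by
        rw [abs_sub_lt_iff]
        constructor
        · have := hpE.2.2; have := hqE.2.1; linarith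
        · have := hqE.2.2; have := hpE.2.1; linarith
      have hxsep : s ≤ |p.1 - q.1| := by
        have hmax := hsep i j hne p hpQ q hqQ
        unfold linfDist at hmax
        rcases le_or_gt s |p.1 - q.1| with h | h
        · exact h
        · exact absurd hmax (not_le.mpr (max_lt h hy))
      have hfloor : ∀ a b : ℝ, u1 ≤ a → u1 ≤ b → s ≤ a - b →
          Nat.floor ((b - u1)/s) < Nat.floor ((a - u1)/s) := by
        intro a b ha hb hab
        have hb0 : 0 ≤ (b - u1)/s := div_nonneg (by linarith) (le_of_lt hs)
        have h1 : (b - u1)/s + 1 ≤ (a - u1)/s := by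
          rw [← sub_nonneg]
          have : (a - u1)/s - ((b - u1)/s + 1) = (a - b - s)/s := by
            field_simp
            ring
          rw [this]
          apply div_nonneg (by linarith) (le_of_lt hs)
        calc Nat.floor ((b - u1)/s) < Nat.floor ((b - u1)/s) + 1 := Nat.lt_succ_self _
          _ = Nat.floor ((b - u1)/s + 1) := (Nat.floor_add_one hb0).symm
          _ ≤ Nat.floor ((a - u1)/s) := Nat.floor_le_floor h1
      have hgi : g i = Nat.floor ((p.1 - u1)/s) := by rw [hg]; simp only [dif_pos hI1]; rfl
      have hgj : g j = Nat.floor ((q.1 - u1)/s) := by rw [hg]; simp only [dif_pos hI2]; rfl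
      rcases le_abs.mp hxsep with h | h
      · have := hfloor p.1 q.1 hpE.1.1 hqE.1.1 (by linarith)
        rw [hgi, hgj] at hgij
        omega
      · have := hfloor q.1 p.1 hqE.1.1 hpE.1.1 (by linarith)
        rw [hgi, hgj] at hgij
        omega
    calc I.card ≤ (Finset.range (M + 1)).card := Finset.card_le_card_of_injOn g hmaps hinj
      _ = M + 1 := Finset.card_range _
  calc val f E' ≤ _ := hsplit
    _ ≤ (I.card : ℝ) := hsum
    _ ≤ (M : ℝ) + 1 := by
        have : (I.card : ℝ) ≤ ((M + 1 : ℕ) : ℝ) := Nat.cast_le.mpr hcard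
        push_cast at this
        linarith

lemma narrow (n : ℕ) {s : ℝ} (hs : 0 < s) (f : Fin n → Pt → ℝ)
    (hint : ∀ i, Integrable (f i)) (hpos : ∀ i p, 0 ≤ f i p) :
    ∀ (m : ℕ), 1 ≤ m → ∀ (C : Finset (Fin n)) (N : Rect) (c : ℕ),
    C.card = m →
    (∀ j ∈ C, ∀ y : ℝ, val (f j) (N.set ∩ {p | y ≤ p.2 ∧ p.2 ≤ y + s}) ≤ (c : ℝ)) →
    (∀ j ∈ C, ((m - 1 : ℕ) : ℝ) * ((c : ℝ) + 1) + 1 ≤ val (f j) N.set) →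
    ∃ A : Fin n → Rect,
      (∀ j ∈ C, (A j).set ⊆ N.set) ∧
      (∀ i ∈ C, ∀ j ∈ C, i ≠ j → SepSets s ((A i).set) ((A j).set)) ∧
      (∀ j ∈ C, 1 ≤ val (f j) ((A j).set)) := by
  intro m hm
  induction m, hm using Nat.le_induction with
  | base =>
    intro C N c hcard hband htot
    refine ⟨fun _ => N, fun j _ => le_refl _, ?_, ?_⟩
    · intro i hi j hj hij
      exfalso
      exact hij (Finset.card_le_one.mp (le_of_eq hcard) i hi j hj)
    · intro j hj
      have := htot j hj
      simpa using this
  | succ m hm IH =>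
    intro C N c hcard hband htot
    have hC : C.Nonempty := Finset.card_pos.mp (by omega)
    set G : Fin n → ℝ → ℝ := fun j y => val (f j) (N.set ∩ {p : Pt | p.2 ≤ y}) with hG
    have hGcont : ∀ j, Continuous (G j) := fun j =>
      val_cont (hint j) measurable_snd null_hline (rect_meas N)
    have hGmono : ∀ j, Monotone (G j) := by
      intro j x y hxy
      apply val_mono (hint j) (hpos j)
      exact Set.inter_subset_inter_right _ fun p hp => le_trans hp hxy
    have hGc : ∀ j, G j N.c = 0 := by
      intro j
      apply val_null
      apply measure_mono_null _ (null_hline N.c)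
      rintro p ⟨hp1, hp2⟩
      exact le_antisymm hp2 hp1.2.1
    have hGtotal : ∀ j, ∀ y, N.d ≤ y → G j y = val (f j) N.set := by
      intro j y hy
      have hsub : N.set ∩ {p : Pt | p.2 ≤ y} = N.set :=
        Set.inter_eq_self_of_subset_left (fun p hp => le_trans hp.2.2 hy)
      show val (f j) (N.set ∩ {p : Pt | p.2 ≤ y}) = val (f j) N.set
      rw [hsub]
    have hTH2 : (2:ℝ) ≤ ((m + 1 - 1 : ℕ) : ℝ) * ((c:ℝ) + 1) + 1 := by
      have h1 : (1:ℝ) ≤ ((m + 1 - 1 : ℕ) : ℝ) := by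
        have : 1 ≤ m + 1 - 1 := by omega
        exact_mod_cast this
      have h2 : (1:ℝ) ≤ (c:ℝ) + 1 := by
        have : (0:ℝ) ≤ (c:ℝ) := Nat.cast_nonneg c
        linarith
      nlinarith
    set SS : Fin n → Set ℝ := fun j => {y | G j y ≤ 1} with hSS
    have hSSne : ∀ j, (SS j).Nonempty := fun j => ⟨N.c, by simp [hSS, hGc j]⟩
    have hSSbdd : ∀ j ∈ C, ∀ y ∈ SS j, y ≤ N.d := by
      intro j hj y hy
      by_contra hlt
      push_neg at hlt
      have h1 : G j y = val (f j) N.set := hGtotal j y (le_of_lt hlt)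
      have h2 : G j y ≤ 1 := hy
      have h3 := htot j hj
      rw [h1] at h2
      linarith
    set μ : Fin n → ℝ := fun j => sSup (SS j) with hμ
    have hμmem : ∀ j ∈ C, G j (μ j) ≤ 1 := by
      intro j hj
      have hcl : IsClosed (SS j) := isClosed_le (hGcont j) continuous_const
      exact hcl.csSup_mem (hSSne j) ⟨N.d, fun y hy => hSSbdd j hj y hy⟩
    have hμbdd : ∀ j ∈ C, BddAbove (SS j) := fun j hj => ⟨N.d, fun y hy => hSSbdd j hj y hy⟩
    have hμmem : ∀ j ∈ C, G j (μ j) ≤ 1 := by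
      intro j hj
      have hcl : IsClosed (SS j) := isClosed_le (hGcont j) continuous_const
      exact hcl.csSup_mem (hSSne j) (hμbdd j hj)
    have hμgt : ∀ j ∈ C, ∀ y, μ j < y → 1 < G j y := by
      intro j hj y hy
      by_contra hle
      push_neg at hle
      have hyS : y ∈ SS j := hle
      exact absurd (le_csSup (hμbdd j hj) hyS) (not_le.mpr hy)
    obtain ⟨j₀, hj₀C, hj₀⟩ := Finset.exists_mem_eq_inf' hC μ
    set μs := C.inf' hC μ with hμs
    have hμsle : ∀ j ∈ C, μs ≤ μ j := fun j hj => Finset.inf'_le μ hj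
    -- value of the chosen piece is at least 1
    have hj₀val : 1 ≤ G j₀ μs := by
      by_contra hlt
      push_neg at hlt
      have hopen : IsOpen {y | G j₀ y < 1} := isOpen_lt (hGcont j₀) continuous_const
      rcases Metric.isOpen_iff.mp hopen μs (by exact hlt) with ⟨ε, hε, hball⟩
      have hmem : μs + ε/2 ∈ {y | G j₀ y < 1} := by
        apply hball
        rw [Real.ball_eq_Ioo]
        constructor <;> [linarith; linarith]
      have : μs + ε/2 ∈ SS j₀ := show G j₀ _ ≤ 1 from le_of_lt hmem
      have h5 : μs + ε/2 ≤ μ j₀ := le_csSup (hμbdd j₀ hj₀C) this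
      rw [← hj₀] at h5
      linarith
    have hμsc : N.c < μs := by
      by_contra hle
      push_neg at hle
      have : G j₀ μs ≤ G j₀ N.c := hGmono j₀ hle
      rw [hGc j₀] at this
      linarith
    have hμsd : μs ≤ N.d := by
      rw [hj₀]
      apply csSup_le (hSSne j₀) (fun y hy => hSSbdd j₀ hj₀C y hy)
    -- piece for j₀
    set A0 : Rect := ⟨N.a, N.b, N.c, μs, N.hab, hμsc⟩ with hA0
    have hA0set : A0.set = N.set ∩ {p : Pt | p.2 ≤ μs} := by
      rw [hA0]
      unfold Rect.set
      ext p
      simp only [Set.mem_prod, Set.mem_Icc, Set.mem_inter_iff, Set.mem_setOf_eq]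
      constructor
      · rintro ⟨⟨h1a, h1b⟩, ⟨h2a, h2b⟩⟩
        exact ⟨⟨⟨h1a, h1b⟩, ⟨h2a, le_trans h2b hμsd⟩⟩, h2b⟩
      · rintro ⟨⟨⟨h1a, h1b⟩, ⟨h2a, _⟩⟩, h4⟩
        exact ⟨⟨h1a, h1b⟩, ⟨h2a, h4⟩⟩
    have hA0val : 1 ≤ val (f j₀) A0.set := by rw [hA0set]; exact hj₀val
    -- the rest
    set C' : Finset (Fin n) := C.erase j₀ with hC'
    have hC'card : C'.card = m := by
      rw [hC', Finset.card_erase_of_mem hj₀C, hcard]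
      omega
    have hC'ne : C'.Nonempty := Finset.card_pos.mp (by omega)
    have hGband : ∀ j ∈ C, G j (μs + s) ≤ 1 + (c:ℝ) := by
      intro j hj
      have hsplit := val_split (hint j) measurable_snd null_hline
        ((rect_meas N).inter (meas_y_le (μs + s))) μs
      have e1 : (N.set ∩ {p : Pt | p.2 ≤ μs + s}) ∩ {p : Pt | p.2 ≤ μs} = N.set ∩ {p : Pt | p.2 ≤ μs} := by
        ext p
        simp only [Set.mem_inter_iff, Set.mem_setOf_eq]
        constructor
        · rintro ⟨⟨h1, _⟩, h3⟩; exact ⟨h1, h3⟩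
        · rintro ⟨h1, h2⟩; exact ⟨⟨h1, by linarith⟩, h2⟩
      have e2 : (N.set ∩ {p : Pt | p.2 ≤ μs + s}) ∩ {p : Pt | μs ≤ p.2} = N.set ∩ {p : Pt | μs ≤ p.2 ∧ p.2 ≤ μs + s} := by
        ext p
        simp only [Set.mem_inter_iff, Set.mem_setOf_eq]
        tauto
      rw [e1, e2] at hsplit
      have hb := hband j hj μs
      have hμj : G j μs ≤ 1 := le_trans (hGmono j (hμsle j hj)) (hμmem j hj)
      show val (f j) (N.set ∩ {p : Pt | p.2 ≤ μs + s}) ≤ 1 + (c:ℝ)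
      rw [hsplit]
      exact add_le_add hμj hb
    have hrest : ∀ j ∈ C, ((m - 1 : ℕ) : ℝ) * ((c:ℝ) + 1) + 1 ≤ val (f j) (N.set ∩ {p : Pt | μs + s ≤ p.2}) := by
      intro j hj
      have hsplit := val_split (hint j) measurable_snd null_hline (rect_meas N) (μs + s)
      have htot' := htot j hj
      have hgb := hGband j hj
      have hGexp : val (f j) (N.set ∩ {p : Pt | p.2 ≤ μs + s}) = G j (μs + s) := rfl
      have hcast : ((m + 1 - 1 : ℕ) : ℝ) = ((m - 1 : ℕ) : ℝ) + 1 := by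
        have h1 : m + 1 - 1 = (m - 1) + 1 := by omega
        rw [h1]
        push_cast
        ring
      rw [hcast] at htot'
      rw [hsplit, hGexp] at htot'
      linarith
    have hrest_pos : ∀ j ∈ C, (1:ℝ) ≤ val (f j) (N.set ∩ {p : Pt | μs + s ≤ p.2}) := by
      intro j hj
      have := hrest j hj
      have h0 : (0:ℝ) ≤ ((m - 1 : ℕ) : ℝ) * ((c:ℝ) + 1) := by positivity
      linarith
    have hμsd' : μs + s < N.d := by
      by_contra hle
      push_neg at hle
      obtain ⟨j₁, hj₁⟩ := hC'ne
      have hj₁C : j₁ ∈ C := Finset.mem_of_mem_erase hj₁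
      have hval0 : val (f j₁) (N.set ∩ {p : Pt | μs + s ≤ p.2}) = 0 := by
        apply val_null
        apply measure_mono_null _ (null_hline N.d)
        rintro p ⟨hp1, hp2⟩
        exact le_antisymm hp1.2.2 (le_trans hle hp2)
      have := hrest_pos j₁ hj₁C
      rw [hval0] at this
      linarith
    set N' : Rect := ⟨N.a, N.b, μs + s, N.d, N.hab, hμsd'⟩ with hN'
    have hN'set : N'.set = N.set ∩ {p : Pt | μs + s ≤ p.2} := by
      rw [hN']
      unfold Rect.set
      ext p
      simp only [Set.mem_prod, Set.mem_Icc, Set.mem_inter_iff, Set.mem_setOf_eq]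
      constructor
      · rintro ⟨⟨h1a, h1b⟩, ⟨h2a, h2b⟩⟩
        exact ⟨⟨⟨h1a, h1b⟩, ⟨by linarith, h2b⟩⟩, h2a⟩
      · rintro ⟨⟨⟨h1a, h1b⟩, ⟨h2a, h2b⟩⟩, h4⟩
        exact ⟨⟨h1a, h1b⟩, ⟨h4, h2b⟩⟩
    have hN'sub : N'.set ⊆ N.set := by rw [hN'set]; exact Set.inter_subset_left
    -- apply induction hypothesis
    have hband' : ∀ j ∈ C', ∀ y : ℝ, val (f j) (N'.set ∩ {p | y ≤ p.2 ∧ p.2 ≤ y + s}) ≤ (c : ℝ) := by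
      intro j hj y
      refine le_trans (val_mono (hint j) (hpos j) ?_) (hband j (Finset.mem_of_mem_erase hj) y)
      exact Set.inter_subset_inter_left _ hN'sub
    have htot' : ∀ j ∈ C', ((m - 1 : ℕ) : ℝ) * ((c : ℝ) + 1) + 1 ≤ val (f j) N'.set := by
      intro j hj
      rw [hN'set]
      exact hrest j (Finset.mem_of_mem_erase hj)
    obtain ⟨A', hA'sub, hA'sep, hA'val⟩ := IH C' N' c hC'card hband' htot'
    classical
    refine ⟨fun i => if i = j₀ then A0 else A' i, ?_, ?_, ?_⟩
    · intro j hj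
      by_cases h : j = j₀
      · subst h
        simp only [if_pos]
        show A0.set ⊆ N.set
        rw [hA0set]
        exact Set.inter_subset_left
      · simp only [if_neg h]
        exact le_trans (hA'sub j (Finset.mem_erase.mpr ⟨h, hj⟩)) hN'sub
    · intro i hi j hj hij
      have key : ∀ a b : Pt, a.2 ≤ μs → μs + s ≤ b.2 → s ≤ linfDist a b := by
        intro a b ha hb
        apply le_trans _ (le_max_right |a.1 - b.1| |a.2 - b.2|)
        rw [abs_sub_comm]
        rw [abs_of_nonneg (by linarith)]
        linarith
      by_cases h1 : i = j₀
      · subst h1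
        have h2 : j ≠ i := Ne.symm hij
        simp only [if_pos rfl, if_neg (Ne.symm hij)]
        intro p hp q hq
        have hp2 : p.2 ≤ μs := (hA0set ▸ hp).2
        have hq2 : μs + s ≤ q.2 := (hN'set ▸ (hA'sub j (Finset.mem_erase.mpr ⟨Ne.symm hij, hj⟩)) hq).2
        exact key p q hp2 hq2
      · by_cases h2 : j = j₀
        · subst h2
          simp only [if_neg h1, if_pos rfl]
          intro p hp q hq
          have hq2 : q.2 ≤ μs := (hA0set ▸ hq).2
          have hp2 : μs + s ≤ p.2 := (hN'set ▸ (hA'sub i (Finset.mem_erase.mpr ⟨h1, hi⟩)) hp).2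
          have := key q p hq2 hp2
          unfold linfDist at this ⊢
          rw [abs_sub_comm q.1 p.1, abs_sub_comm q.2 p.2] at this
          exact this
        · simp only [if_neg h1, if_neg h2]
          exact hA'sep i (Finset.mem_erase.mpr ⟨h1, hi⟩) j (Finset.mem_erase.mpr ⟨h2, hj⟩) hij
    · intro j hj
      by_cases h : j = j₀
      · subst h
        simp only [if_pos rfl]
        exact hA0val
      · simp only [if_neg h]
        exact hA'val j (Finset.mem_erase.mpr ⟨h, hj⟩)

lemma num2' : ∀ a : ℕ, 1 ≤ a → 2*a+5 ≤ 2^(a+2) := by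
  intro a ha
  induction a, ha using Nat.le_induction with
  | base => norm_num
  | succ a ha ih =>
    have h2 : 2 ≤ 2^(a+2) := by
      calc 2 = 2^1 := by norm_num
        _ ≤ 2^(a+2) := Nat.pow_le_pow_right (by norm_num) (by omega)
    calc 2*(a+1)+5 = (2*a+5)+2 := by ring
      _ ≤ 2^(a+2) + 2^(a+2) := add_le_add ih h2
      _ = 2^(a+1+2) := by ring

lemma num1' : ∀ a : ℕ, a*(a+4)+2 ≤ 2^(a+2) := by
  intro a
  rcases Nat.eq_zero_or_pos a with h | h
  · subst h; norm_num
  · induction a, h using Nat.le_induction with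
    | base => norm_num
    | succ a ha ih =>
      calc (a+1)*(a+1+4)+2 = (a*(a+4)+2) + (2*a+5) := by ring
        _ ≤ 2^(a+2) + 2^(a+2) := add_le_add ih (num2' a ha)
        _ = 2^(a+1+2) := by ring

lemma numkey {k m t : ℕ} (hk : 1 ≤ k) (hm : m ≤ k) (ht : t ≤ k) :
    (m-1)*(t+3)+2 ≤ 2^(k+1) := by
  have h1 : (m-1)*(t+3) ≤ (k-1)*(k+3) :=
    Nat.mul_le_mul (by omega) (by omega)
  have h2 : (k-1)*(k+3)+2 ≤ 2^(k+1) := by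
    have := num1' (k-1)
    have e1 : k - 1 + 4 = k + 3 := by omega
    have e2 : k - 1 + 2 = k + 1 := by omega
    rw [e1, e2] at this
    exact this
  omega

lemma main_lemma (n : ℕ) {s : ℝ} (hs : 0 < s) (f : Fin n → Pt → ℝ)
    (hint : ∀ i, Integrable (f i)) (hpos : ∀ i p, 0 ≤ f i p)
    (hnorm : ∀ i, SNormalized s (f i)) :
    ∀ (k : ℕ), 1 ≤ k → ∀ (S : Finset (Fin n)) (R : Rect), S.card = k →
    (∀ i ∈ S, (2:ℝ)^(k+2) ≤ val (f i) R.set) →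
    ∃ A : Fin n → Rect,
      (∀ i ∈ S, (A i).set ⊆ R.set) ∧
      (∀ i ∈ S, ∀ j ∈ S, i ≠ j → SepSets s ((A i).set) ((A j).set)) ∧
      (∀ i ∈ S, 1 ≤ val (f i) ((A i).set)) := by
  intro k
  induction k using Nat.strong_induction_on with
  | _ k IH =>
  intro hk S R hcard hval
  classical
  by_cases hk1 : k = 1
  · refine ⟨fun _ => R, fun i _ => le_refl _, ?_, ?_⟩
    · intro i hi j hj hij
      exfalso
      apply hij
      apply Finset.card_le_one.mp (le_of_eq (hcard.trans hk1)) i hi j hj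
    · intro i hi
      have h1 : (1:ℝ) ≤ (2:ℝ)^(k+2) := one_le_pow₀ (by norm_num)
      exact le_trans h1 (hval i hi)
  -- k ≥ 2
  have hk2 : 2 ≤ k := by omega
  have hS : S.Nonempty := Finset.card_pos.mp (by omega)
  set B : ℝ := (2:ℝ)^(k+1) with hB
  have hBpos : 0 < B := by positivity
  have hB2 : (2:ℝ)^(k+2) = 2*B := by rw [hB]; ring
  have hB1 : (1:ℝ) ≤ B := one_le_pow₀ (by norm_num)
  set F : Fin n → ℝ → ℝ := fun j x => val (f j) (R.set ∩ {p : Pt | p.1 ≤ x}) with hF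
  have hFcont : ∀ j, Continuous (F j) := fun j =>
    val_cont (hint j) measurable_fst null_vline (rect_meas R)
  have hFmono : ∀ j, Monotone (F j) := by
    intro j x y hxy
    apply val_mono (hint j) (hpos j)
    exact Set.inter_subset_inter_right _ fun p hp => le_trans hp hxy
  have hFa : ∀ j, ∀ x, x ≤ R.a → F j x = 0 := by
    intro j x hx
    apply val_null
    apply measure_mono_null _ (null_vline R.a)
    rintro p ⟨hp1, hp2⟩
    exact le_antisymm (le_trans hp2 hx) hp1.1.1
  have hFtot : ∀ j, ∀ x, R.b ≤ x → F j x = val (f j) R.set := by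
    intro j x hx
    have hsub : R.set ∩ {p : Pt | p.1 ≤ x} = R.set :=
      Set.inter_eq_self_of_subset_left (fun p hp => le_trans hp.1.2 hx)
    show val (f j) (R.set ∩ {p : Pt | p.1 ≤ x}) = val (f j) R.set
    rw [hsub]
  set SS : Fin n → Set ℝ := fun j => {x | F j (x + s) ≤ B} with hSS
  have hSSne : ∀ j, (SS j).Nonempty := by
    intro j
    refine ⟨R.a - s, ?_⟩
    show F j (R.a - s + s) ≤ B
    rw [show R.a - s + s = R.a by ring, hFa j R.a (le_refl _)]
    exact le_of_lt hBpos
  have hSSbdd : ∀ j ∈ S, ∀ x ∈ SS j, x ≤ R.b := by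
    intro j hj x hx
    by_contra hlt
    push_neg at hlt
    have h1 : F j (x + s) = val (f j) R.set := hFtot j _ (by linarith)
    have h2 : F j (x + s) ≤ B := hx
    rw [h1] at h2
    have h3 := hval j hj
    rw [hB2] at h3
    linarith
  set X : Fin n → ℝ := fun j => sSup (SS j) with hX
  have hXbdd : ∀ j ∈ S, BddAbove (SS j) := fun j hj => ⟨R.b, fun x hx => hSSbdd j hj x hx⟩
  have hXmem : ∀ j ∈ S, F j (X j + s) ≤ B := by
    intro j hj
    have hcl : IsClosed (SS j) := by
      have : Continuous (fun x => F j (x + s)) := (hFcont j).comp (continuous_add_right s)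
      exact isClosed_le this continuous_const
    exact hcl.csSup_mem (hSSne j) (hXbdd j hj)
  have hXgt : ∀ j ∈ S, ∀ x, X j < x → B < F j (x + s) := by
    intro j hj x hx
    by_contra hle
    push_neg at hle
    have : x ∈ SS j := hle
    exact absurd (le_csSup (hXbdd j hj) this) (not_le.mpr hx)
  have hXlb : ∀ j ∈ S, R.a - s ≤ X j := by
    intro j hj
    apply le_csSup (hXbdd j hj)
    show F j (R.a - s + s) ≤ B
    rw [show R.a - s + s = R.a by ring, hFa j R.a (le_refl _)]
    exact le_of_lt hBpos
  have hXub : ∀ j ∈ S, X j ≤ R.b := fun j hj =>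
    csSup_le (hSSne j) (fun x hx => hSSbdd j hj x hx)
  obtain ⟨j₀, hj₀S, hj₀⟩ := Finset.exists_mem_eq_inf' hS X
  set xs := S.inf' hS X with hxs
  have hxsle : ∀ j ∈ S, xs ≤ X j := fun j hj => Finset.inf'_le X hj
  have hxslb : R.a - s ≤ xs := hj₀ ▸ hXlb j₀ hj₀S
  have hxsub : xs ≤ R.b := hj₀ ▸ hXub j₀ hj₀S
  have hFb : ∀ j ∈ S, ∀ x, x ≤ X j → F j (x + s) ≤ B := by
    intro j hj x hx
    exact le_trans (hFmono j (by linarith)) (hXmem j hj)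
  -- key: rest of R beyond a cut point u has large value when F j u is small
  have hrest : ∀ j ∈ S, ∀ u : ℝ, F j u ≤ B → B ≤ val (f j) (R.set ∩ {p : Pt | u ≤ p.1}) := by
    intro j hj u hu
    have hsplit := val_split (hint j) measurable_fst null_vline (rect_meas R) u
    have h3 := hval j hj
    rw [hB2] at h3
    have : F j u = val (f j) (R.set ∩ {p : Pt | p.1 ≤ u}) := rfl
    linarith [hsplit ▸ h3]
  by_cases hcaseA : ∃ i ∈ S, 1 ≤ F i xs
  · -- Case A : peel off agent i on the left
    obtain ⟨i, hiS, hi1⟩ := hcaseA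
    have hax : R.a < xs := by
      by_contra hle
      push_neg at hle
      rw [hFa i xs hle] at hi1
      linarith
    have hAi : Rect := ⟨R.a, xs, R.c, R.d, hax, R.hcd⟩
    set Ai : Rect := ⟨R.a, xs, R.c, R.d, hax, R.hcd⟩ with hAidef
    have hAiset : Ai.set = R.set ∩ {p : Pt | p.1 ≤ xs} := by
      unfold Rect.set
      ext p
      simp only [Set.mem_prod, Set.mem_Icc, Set.mem_inter_iff, Set.mem_setOf_eq]
      constructor
      · rintro ⟨⟨h1a, h1b⟩, h2⟩
        exact ⟨⟨⟨h1a, le_trans h1b hxsub⟩, h2⟩, h1b⟩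
      · rintro ⟨⟨⟨h1a, _⟩, h2⟩, h4⟩
        exact ⟨⟨h1a, h4⟩, h2⟩
    have hAival : 1 ≤ val (f i) Ai.set := by rw [hAiset]; exact hi1
    have hrestB : ∀ j ∈ S, B ≤ val (f j) (R.set ∩ {p : Pt | xs + s ≤ p.1}) := by
      intro j hj
      apply hrest j hj
      exact hFb j hj xs (hxsle j hj)
    have hbxs : xs + s < R.b := by
      by_contra hle
      push_neg at hle
      have h0 : val (f i) (R.set ∩ {p : Pt | xs + s ≤ p.1}) = 0 := by
        apply val_null
        apply measure_mono_null _ (null_vline R.b)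
        rintro p ⟨hp1, hp2⟩
        exact le_antisymm hp1.1.2 (le_trans hle hp2)
      have := hrestB i hiS
      rw [h0] at this
      linarith
    set R' : Rect := ⟨xs + s, R.b, R.c, R.d, hbxs, R.hcd⟩ with hR'def
    have hR'set : R'.set = R.set ∩ {p : Pt | xs + s ≤ p.1} := by
      unfold Rect.set
      ext p
      simp only [Set.mem_prod, Set.mem_Icc, Set.mem_inter_iff, Set.mem_setOf_eq]
      constructor
      · rintro ⟨⟨h1a, h1b⟩, h2⟩
        exact ⟨⟨⟨by linarith, h1b⟩, h2⟩, h1a⟩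
      · rintro ⟨⟨⟨_, h1b⟩, h2⟩, h4⟩
        exact ⟨⟨h4, h1b⟩, h2⟩
    have hR'sub : R'.set ⊆ R.set := by rw [hR'set]; exact Set.inter_subset_left
    set S' : Finset (Fin n) := S.erase i with hS'def
    have hS'card : S'.card = k - 1 := by
      rw [hS'def, Finset.card_erase_of_mem hiS, hcard]
    have hS'k : 1 ≤ k - 1 := by omega
    have hval' : ∀ j ∈ S', (2:ℝ)^((k-1)+2) ≤ val (f j) R'.set := by
      intro j hj
      have e : (k-1)+2 = k+1 := by omega
      rw [e, hR'set]
      exact hrestB j (Finset.mem_of_mem_erase hj)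
    obtain ⟨A', hA'sub, hA'sep, hA'val⟩ :=
      IH (k-1) (by omega) hS'k S' R' hS'card hval'
    refine ⟨fun j => if j = i then Ai else A' j, ?_, ?_, ?_⟩
    · intro j hj
      by_cases h : j = i
      · simp only [if_pos h]
        rw [hAiset]
        exact Set.inter_subset_left
      · simp only [if_neg h]
        exact le_trans (hA'sub j (Finset.mem_erase.mpr ⟨h, hj⟩)) hR'sub
    · intro a ha b hb hab
      have key : ∀ p q : Pt, p.1 ≤ xs → xs + s ≤ q.1 → s ≤ linfDist p q := by
        intro p q hp hq
        apply le_trans _ (le_max_left |p.1 - q.1| |p.2 - q.2|)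
        rw [abs_sub_comm, abs_of_nonneg (by linarith)]
        linarith
      by_cases h1 : a = i
      · subst h1
        simp only [if_pos rfl, if_neg (Ne.symm hab)]
        intro p hp q hq
        exact key p q (hAiset ▸ hp).2
          (hR'set ▸ (hA'sub b (Finset.mem_erase.mpr ⟨Ne.symm hab, hb⟩)) hq).2
      · by_cases h2 : b = i
        · subst h2
          simp only [if_neg h1, if_pos rfl]
          intro p hp q hq
          have h5 := key q p (hAiset ▸ hq).2
            (hR'set ▸ (hA'sub a (Finset.mem_erase.mpr ⟨h1, ha⟩)) hp).2
          unfold linfDist at h5 ⊢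
          rw [abs_sub_comm q.1 p.1, abs_sub_comm q.2 p.2] at h5
          exact h5
        · simp only [if_neg h1, if_neg h2]
          exact hA'sep a (Finset.mem_erase.mpr ⟨h1, ha⟩) b (Finset.mem_erase.mpr ⟨h2, hb⟩) hab
    · intro j hj
      by_cases h : j = i
      · subst h
        simp only [if_pos rfl]
        exact hAival
      · simp only [if_neg h]
        exact hA'val j (Finset.mem_erase.mpr ⟨h, hj⟩)
  · -- Case B : cluster
    push_neg at hcaseA
    set φ : Fin n → ℕ := fun j => Nat.floor ((X j - xs)/s) with hφ
    have hφ0 : φ j₀ = 0 := by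
      rw [hφ]
      simp only
      rw [← hj₀]
      simp
    -- pigeonhole : some bucket t in [1,k] is unoccupied
    have hpigeon : ∃ t : ℕ, 1 ≤ t ∧ t ≤ k ∧ ∀ j ∈ S, φ j ≠ t := by
      by_contra hcon
      push_neg at hcon
      have hsub : insert 0 (Finset.Icc 1 k) ⊆ S.image φ := by
        intro t ht
        rcases Finset.mem_insert.mp ht with h | h
        · subst h
          exact Finset.mem_image.mpr ⟨j₀, hj₀S, hφ0⟩
        · rw [Finset.mem_Icc] at h
          obtain ⟨j, hjS, hjφ⟩ := hcon t h.1 h.2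
          exact Finset.mem_image.mpr ⟨j, hjS, hjφ⟩
      have hc1 : (insert 0 (Finset.Icc 1 k)).card = k + 1 := by
        rw [Finset.card_insert_of_notMem (by simp), Nat.card_Icc]
        omega
      have hc2 : (S.image φ).card ≤ k := le_trans (Finset.card_image_le) (le_of_eq hcard)
      have := Finset.card_le_card hsub
      omega
    obtain ⟨t, ht1, htk, htfree⟩ := hpigeon
    have hts : (0:ℝ) < (t:ℝ) * s := by
      apply mul_pos _ hs
      exact_mod_cast ht1
    set C : Finset (Fin n) := S.filter (fun j => X j < xs + (t:ℝ)*s) with hC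
    have hCsub : C ⊆ S := Finset.filter_subset _ _
    have hj₀C : j₀ ∈ C := by
      rw [hC, Finset.mem_filter]
      exact ⟨hj₀S, by rw [← hj₀]; linarith⟩
    set m := C.card with hm
    have hm1 : 1 ≤ m := Finset.card_pos.mpr ⟨j₀, hj₀C⟩
    have hmk : m ≤ k := hcard ▸ Finset.card_le_card hCsub
    have hFar : ∀ j ∈ S, j ∉ C → xs + ((t:ℝ)+1)*s ≤ X j := by
      intro j hjS hjC
      have hnot : ¬ (X j < xs + (t:ℝ)*s) := by
        intro hlt
        exact hjC (Finset.mem_filter.mpr ⟨hjS, hlt⟩)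
      push_neg at hnot
      have hge : (0:ℝ) ≤ (X j - xs)/s := div_nonneg (by linarith [hxsle j hjS]) (le_of_lt hs)
      have hget : (t:ℝ) ≤ (X j - xs)/s := by
        rw [le_div_iff₀ hs]
        linarith
      have hfl : t ≤ φ j := Nat.le_floor hget
      have hne : φ j ≠ t := htfree j hjS
      have hfl1 : t + 1 ≤ φ j := by omega
      have : ((t:ℝ)+1) ≤ (X j - xs)/s := by
        have h5 : ((t+1 : ℕ):ℝ) ≤ (X j - xs)/s := by
          apply le_trans _ (Nat.floor_le hge)
          exact_mod_cast hfl1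
        push_cast at h5
        linarith
      rw [le_div_iff₀ hs] at this
      linarith
    set u2 : ℝ := xs + ((t:ℝ)+1)*s with hu2
    -- cluster agents have plenty of mass in the strip [xs, u2]
    have hxsu2 : xs ≤ u2 := by
      rw [hu2]
      nlinarith [hts, hs.le]
    have hmid : ∀ j ∈ C, B - 1 < val (f j) (R.set ∩ {p : Pt | xs ≤ p.1 ∧ p.1 ≤ u2}) := by
      intro j hj
      have hjS := hCsub hj
      have hXj : X j < xs + (t:ℝ)*s := (Finset.mem_filter.mp hj).2
      have hgt : B < F j (xs + (t:ℝ)*s + s) := hXgt j hjS _ hXj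
      have hequ : xs + (t:ℝ)*s + s = u2 := by rw [hu2]; ring
      rw [hequ] at hgt
      have hlt1 : F j xs < 1 := hcaseA j hjS
      have hsplit := val_split (hint j) measurable_fst null_vline
        ((rect_meas R).inter (meas_x_le u2)) xs
      have e1 : (R.set ∩ {p : Pt | p.1 ≤ u2}) ∩ {p : Pt | p.1 ≤ xs} = R.set ∩ {p : Pt | p.1 ≤ xs} := by
        ext p
        simp only [Set.mem_inter_iff, Set.mem_setOf_eq]
        constructor
        · rintro ⟨⟨h1, _⟩, h3⟩; exact ⟨h1, h3⟩
        · rintro ⟨h1, h2⟩; exact ⟨⟨h1, le_trans h2 hxsu2⟩, h2⟩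
      have e2 : (R.set ∩ {p : Pt | p.1 ≤ u2}) ∩ {p : Pt | xs ≤ p.1} = R.set ∩ {p : Pt | xs ≤ p.1 ∧ p.1 ≤ u2} := by
        ext p
        simp only [Set.mem_inter_iff, Set.mem_setOf_eq]
        tauto
      rw [e1, e2] at hsplit
      have hFu2 : F j u2 = val (f j) (R.set ∩ {p : Pt | p.1 ≤ u2}) := rfl
      have hFxs : F j xs = val (f j) (R.set ∩ {p : Pt | p.1 ≤ xs}) := rfl
      rw [← hFu2, ← hFxs] at hsplit
      linarith
    set lo : ℝ := max R.a xs with hlo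
    set hi : ℝ := min R.b u2 with hhi
    have hset_mid : R.set ∩ {p : Pt | xs ≤ p.1 ∧ p.1 ≤ u2} = Set.Icc lo hi ×ˢ Set.Icc R.c R.d := by
      ext p
      unfold Rect.set
      simp only [Set.mem_inter_iff, Set.mem_setOf_eq, Set.mem_prod, Set.mem_Icc, hlo, hhi,
        max_le_iff, le_min_iff]
      constructor
      · rintro ⟨⟨⟨h1a, h1b⟩, h2⟩, h3, h4⟩
        exact ⟨⟨⟨h1a, h3⟩, ⟨h1b, h4⟩⟩, h2⟩
      · rintro ⟨⟨⟨h1a, h3⟩, ⟨h1b, h4⟩⟩, h2⟩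
        exact ⟨⟨⟨h1a, h1b⟩, h2⟩, h3, h4⟩
    have hBm1 : (0:ℝ) < B - 1 := by
      have : (2:ℝ) = 2^1 := by norm_num
      have h2 : (2:ℝ)^1 ≤ (2:ℝ)^(k+1) := by
        apply pow_le_pow_right₀ (by norm_num)
        omega
      rw [hB]
      linarith
    have hlohi : lo < hi := by
      by_contra hle
      push_neg at hle
      have h0 : val (f j₀) (R.set ∩ {p : Pt | xs ≤ p.1 ∧ p.1 ≤ u2}) = 0 := by
        apply val_null
        rw [hset_mid]
        apply measure_mono_null _ (null_vline lo)
        rintro p ⟨hp1, hp2⟩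
        exact le_antisymm (le_trans hp1.2 hle) hp1.1
      have := hmid j₀ hj₀C
      rw [h0] at this
      linarith
    set N : Rect := ⟨lo, hi, R.c, R.d, hlohi, R.hcd⟩ with hNdef
    have hNset : N.set = Set.Icc lo hi ×ˢ Set.Icc R.c R.d := rfl
    have hNsub : N.set ⊆ R.set := by
      rw [hNset]
      unfold Rect.set
      apply Set.prod_mono _ (le_refl _)
      apply Set.Icc_subset_Icc (le_max_left _ _) (min_le_left _ _)
    have hNval : ∀ j ∈ C, B - 1 < val (f j) N.set := by
      intro j hj
      rw [hNset, ← hset_mid]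
      exact hmid j hj
    -- band bound for the narrow lemma
    have hband : ∀ j ∈ C, ∀ y : ℝ, val (f j) (N.set ∩ {p | y ≤ p.2 ∧ p.2 ≤ y + s}) ≤ ((t+2 : ℕ) : ℝ) := by
      intro j hj y
      have hsub : N.set ∩ {p : Pt | y ≤ p.2 ∧ p.2 ≤ y + s} ⊆ Set.Icc lo hi ×ˢ Set.Icc y (y + s) := by
        rintro p ⟨hp1, hp2, hp3⟩
        exact ⟨hp1.1, hp2, hp3⟩
      apply le_trans (val_mono (hint j) (hpos j) hsub)
      have hcnt := count_le hs (hint j) (hpos j) (hnorm j) lo hi y (t+1)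
        (by
          have h1 : lo ≥ xs := le_max_right _ _
          have h2 : hi ≤ u2 := min_le_right _ _
          have : u2 - xs = ((t:ℝ)+1)*s := by rw [hu2]; ring
          push_cast
          linarith)
      apply le_trans hcnt
      push_cast
      linarith
    have htotN : ∀ j ∈ C, ((m - 1 : ℕ) : ℝ) * (((t+2:ℕ) : ℝ) + 1) + 1 ≤ val (f j) N.set := by
      intro j hj
      have hnum : ((m-1)*(t+3)+2 : ℕ) ≤ 2^(k+1) := numkey (by omega) hmk htk
      have hcast : ((m - 1 : ℕ) : ℝ) * (((t+2:ℕ) : ℝ) + 1) + 2 ≤ B := by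
        rw [hB]
        have h5 : (((m-1)*(t+3)+2 : ℕ) : ℝ) ≤ ((2^(k+1) : ℕ) : ℝ) := Nat.cast_le.mpr hnum
        push_cast at h5 ⊢
        linarith
      have := hNval j hj
      linarith
    obtain ⟨AC, hACsub, hACsep, hACval⟩ :=
      narrow n hs f hint hpos m hm1 C N (t+2) rfl hband htotN
    -- far agents
    set Far : Finset (Fin n) := S \ C with hFarDef
    by_cases hFarNe : Far.Nonempty
    · set r0 : ℝ := xs + ((t:ℝ)+2)*s with hr0
      have hFarX : ∀ j ∈ Far, xs + ((t:ℝ)+1)*s ≤ X j := by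
        intro j hj
        rw [hFarDef, Finset.mem_sdiff] at hj
        exact hFar j hj.1 hj.2
      have hFarF : ∀ j ∈ Far, F j r0 ≤ B := by
        intro j hj
        have hjS : j ∈ S := (Finset.mem_sdiff.mp hj).1
        have hx : r0 ≤ X j + s := by
          have := hFarX j hj
          rw [hr0]
          linarith [this]
        exact le_trans (hFmono j hx) (hXmem j hjS)
      have hFarRest : ∀ j ∈ Far, B ≤ val (f j) (R.set ∩ {p : Pt | r0 ≤ p.1}) := by
        intro j hj
        exact hrest j ((Finset.mem_sdiff.mp hj).1) r0 (hFarF j hj)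
      obtain ⟨jF, hjF⟩ := hFarNe
      have hr0b : r0 < R.b := by
        by_contra hle
        push_neg at hle
        have h0 : val (f jF) (R.set ∩ {p : Pt | r0 ≤ p.1}) = 0 := by
          apply val_null
          apply measure_mono_null _ (null_vline R.b)
          rintro p ⟨hp1, hp2⟩
          exact le_antisymm hp1.1.2 (le_trans hle hp2)
        have := hFarRest jF hjF
        rw [h0] at this
        linarith
      have hr0a : R.a ≤ r0 := by
        rw [hr0]
        nlinarith [hts, hs.le, hxslb]
      set R' : Rect := ⟨r0, R.b, R.c, R.d, hr0b, R.hcd⟩ with hR'def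
      have hR'set : R'.set = R.set ∩ {p : Pt | r0 ≤ p.1} := by
        unfold Rect.set
        ext p
        simp only [Set.mem_prod, Set.mem_Icc, Set.mem_inter_iff, Set.mem_setOf_eq]
        constructor
        · rintro ⟨⟨h1a, h1b⟩, h2⟩
          exact ⟨⟨⟨le_trans hr0a h1a, h1b⟩, h2⟩, h1a⟩
        · rintro ⟨⟨⟨_, h1b⟩, h2⟩, h4⟩
          exact ⟨⟨h4, h1b⟩, h2⟩
      have hR'sub : R'.set ⊆ R.set := by rw [hR'set]; exact Set.inter_subset_left
      set k' := Far.card with hk'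
      have hk'eq : k' = k - m := by
        rw [hk', hFarDef, Finset.card_sdiff_of_subset hCsub, hcard]
      have hk'1 : 1 ≤ k' := Finset.card_pos.mpr ⟨jF, hjF⟩
      have hk'lt : k' < k := by omega
      have hval' : ∀ j ∈ Far, (2:ℝ)^(k'+2) ≤ val (f j) R'.set := by
        intro j hj
        rw [hR'set]
        refine le_trans ?_ (hFarRest j hj)
        rw [hB]
        apply pow_le_pow_right₀ (by norm_num)
        omega
      obtain ⟨AF, hAFsub, hAFsep, hAFval⟩ :=
        IH k' hk'lt hk'1 Far R' rfl hval'
      -- assemble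
      have hmemCF : ∀ j ∈ S, j ∈ C ∨ j ∈ Far := by
        intro j hj
        by_cases h : j ∈ C
        · exact Or.inl h
        · exact Or.inr (Finset.mem_sdiff.mpr ⟨hj, h⟩)
      have hCbound : ∀ p : Pt, p ∈ N.set → p.1 ≤ u2 := by
        intro p hp
        exact le_trans hp.1.2 (min_le_right _ _)
      have hFbound : ∀ p : Pt, p ∈ R'.set → r0 ≤ p.1 := by
        intro p hp
        exact hp.1.1
      have keyCF : ∀ p q : Pt, p.1 ≤ u2 → r0 ≤ q.1 → s ≤ linfDist p q := by
        intro p q hp hq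
        apply le_trans _ (le_max_left |p.1 - q.1| |p.2 - q.2|)
        have : u2 + s = r0 := by rw [hu2, hr0]; ring
        rw [abs_sub_comm, abs_of_nonneg (by linarith)]
        linarith
      refine ⟨fun j => if j ∈ C then AC j else AF j, ?_, ?_, ?_⟩
      · intro j hj
        by_cases h : j ∈ C
        · simp only [if_pos h]
          exact le_trans (hACsub j h) hNsub
        · simp only [if_neg h]
          exact le_trans (hAFsub j (Finset.mem_sdiff.mpr ⟨hj, h⟩)) hR'sub
      · intro a ha b hb hab
        by_cases h1 : a ∈ C
        · by_cases h2 : b ∈ C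
          · simp only [if_pos h1, if_pos h2]
            exact hACsep a h1 b h2 hab
          · simp only [if_pos h1, if_neg h2]
            intro p hp q hq
            exact keyCF p q (hCbound p (hACsub a h1 hp))
              (hFbound q (hAFsub b (Finset.mem_sdiff.mpr ⟨hb, h2⟩) hq))
        · by_cases h2 : b ∈ C
          · simp only [if_neg h1, if_pos h2]
            intro p hp q hq
            have h5 := keyCF q p (hCbound q (hACsub b h2 hq))
              (hFbound p (hAFsub a (Finset.mem_sdiff.mpr ⟨ha, h1⟩) hp))
            unfold linfDist at h5 ⊢
            rw [abs_sub_comm q.1 p.1, abs_sub_comm q.2 p.2] at h5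
            exact h5
          · simp only [if_neg h1, if_neg h2]
            exact hAFsep a (Finset.mem_sdiff.mpr ⟨ha, h1⟩) b (Finset.mem_sdiff.mpr ⟨hb, h2⟩) hab
      · intro j hj
        by_cases h : j ∈ C
        · simp only [if_pos h]
          exact hACval j h
        · simp only [if_neg h]
          exact hAFval j (Finset.mem_sdiff.mpr ⟨hj, h⟩)
    · -- no far agents : C = S
      have hCS : C = S := by
        apply Finset.Subset.antisymm hCsub
        intro j hj
        by_contra h
        exact hFarNe ⟨j, Finset.mem_sdiff.mpr ⟨hj, h⟩⟩
      refine ⟨AC, ?_, ?_, ?_⟩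
      · intro j hj
        exact le_trans (hACsub j (hCS ▸ hj)) hNsub
      · intro a ha b hb hab
        exact hACsep a (hCS ▸ ha) b (hCS ▸ hb) hab
      · intro j hj
        exact hACval j (hCS ▸ hj)

end mainproof

/-- `n` `s`-normalized agents valuing a rectangle at least `2^(n+2)` each can
each get an `s`-separated sub-rectangle of value at least 1. -/
theorem stmt13 (n : ℕ) (hn : 1 ≤ n) (s : ℝ) (hs : 0 ≤ s)
    (f : Fin n → Pt → ℝ) (hint : ∀ i, Integrable (f i))
    (hpos : ∀ i p, 0 ≤ f i p) (hnorm : ∀ i, SNormalized s (f i))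
    (R : Rect) (hval : ∀ i, (2 : ℝ) ^ (n + 2) ≤ val (f i) R.set) :
    ∃ A : Fin n → Rect,
      (∀ i, (A i).set ⊆ R.set) ∧
      (∀ i j, i ≠ j → SepSets s ((A i).set) ((A j).set)) ∧
      (∀ i, 1 ≤ val (f i) ((A i).set)) := by
  rcases eq_or_lt_of_le hs with hs0 | hs0
  · refine ⟨fun _ => R, fun i => le_refl _, ?_, ?_⟩
    · intro i j hij p hp q hq
      rw [← hs0]
      exact le_max_of_le_left (abs_nonneg _)
    · intro i
      have h1 : (1:ℝ) ≤ 2^(n+2) := one_le_pow₀ (by norm_num)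
      exact le_trans h1 (hval i)
  · obtain ⟨A, h1, h2, h3⟩ := main_lemma n hs0 f hint hpos hnorm n hn Finset.univ R
      (by simp) (fun i _ => hval i)
    exact ⟨A, fun i => h1 i (Finset.mem_univ i),
      fun i j hij => h2 i (Finset.mem_univ i) j (Finset.mem_univ j) hij,
      fun i => h3 i (Finset.mem_univ i)⟩
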